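/- For all groves A and B of planar binary trees with B of positive degree, the reflection involution is multiplicative: σ(A × B) = σ(A) × σ(B). -/

import Mathlib

/-- A planar binary tree: a leaf `|` or a grafting `x ∨ y`. -/
inductive PBT : Type
  | leaf : PBT
  | node : PBT → PBT → PBT
  deriving DecidableEq

namespace PBT

/-- The degree: number of internal vertices. -/
def deg : PBT → ℕ
  | leaf => 0
  | node l r => deg l + deg r + 1

/-- The set `Y n` of planar binary trees of degree `n`. -/
def Y (n : ℕ) : Set PBT := {t | t.deg = n}

/-- The `over` operation `x / y`. -/
def pbtOver : PBT → PBT → PBT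
  | x, leaf => x
  | x, node yl yr => node (pbtOver x yl) yr

/-- The `under` operation `x \ y`. -/
def under : PBT → PBT → PBT
  | leaf, y => y
  | node xl xr, y => node xl (under xr y)

/-- The Tamari order, generated by `(x ∨ y) ∨ z ≤ x ∨ (y ∨ z)` and compatibility
with grafting on both sides. -/
inductive tle : PBT → PBT → Prop
  | refl (x : PBT) : tle x x
  | trans {x y z : PBT} : tle x y → tle y z → tle x z
  | rotate (x y z : PBT) : tle (node (node x y) z) (node x (node y z))
  | node_left {x y : PBT} (z : PBT) : tle x y → tle (node x z) (node y z)
  | node_right {x y : PBT} (z : PBT) : tle x y → tle (node z x) (node z y)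

/-- The sum of two planar binary trees: the Tamari interval `[x/y, x\y]`
(a subset of `Y (deg x + deg y)`). -/
def sum (x y : PBT) : Set PBT := {z | tle (pbtOver x y) z ∧ tle z (under x y)}

/-- A grove of degree `n`: a nonempty subset of `Y n`. -/
def Grove (n : ℕ) (A : Set PBT) : Prop := A.Nonempty ∧ ∀ x ∈ A, x.deg = n

/-- The sum of groves. -/
def gsum (A B : Set PBT) : Set PBT := ⋃ x ∈ A, ⋃ y ∈ B, sum x y

/-- The reflection involution σ. -/
def σ : PBT → PBT
  | leaf => leaf
  | node l r => node (σ r) (σ l)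

/-- The left sum `x ⊣ y` of trees (with the conventions `x ⊣ | = {x}`, `| ⊣ y = {|}`). -/
def lsum : PBT → PBT → Set PBT
  | x, leaf => {x}
  | leaf, _ => {leaf}
  | node xl xr, y => (fun z => node xl z) '' sum xr y

/-- The right sum `x ⊢ y` of trees (with the conventions `| ⊢ y = {y}`, `x ⊢ | = {|}`). -/
def rsum : PBT → PBT → Set PBT
  | leaf, y => {y}
  | _, leaf => {leaf}
  | x, node yl yr => (fun z => node z yr) '' sum x yl

/-- Left sum of groves. -/
def glsum (A B : Set PBT) : Set PBT := ⋃ x ∈ A, ⋃ y ∈ B, lsum x y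

/-- Right sum of groves. -/
def grsum (A B : Set PBT) : Set PBT := ⋃ x ∈ A, ⋃ y ∈ B, rsum x y

/-- Multiplication of a tree by a grove:
`| × B = {|}` and `(xˡ ∨ xʳ) × B = ((xˡ × B) ⊢ B) ⊣ (xʳ × B)`.
(The conventions `{|} ⊢ B = B` and `A ⊣ {|} = A` are built into `rsum`/`lsum`.) -/
def tmul : PBT → Set PBT → Set PBT
  | leaf, _ => {leaf}
  | node l r, B => glsum (grsum (tmul l B) B) (tmul r B)

/-- Multiplication of groves. -/
def gmul (A B : Set PBT) : Set PBT := ⋃ x ∈ A, tmul x B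

end PBT

namespace PBT

lemma σσ : ∀ x : PBT, σ (σ x) = x
  | leaf => rfl
  | node l r => by simp [σ, σσ l, σσ r]

lemma σ_over : ∀ x y : PBT, σ (pbtOver x y) = under (σ y) (σ x)
  | _, leaf => rfl
  | x, node yl yr => by simp [pbtOver, σ, under, σ_over x yl]

lemma σ_under : ∀ x y : PBT, σ (under x y) = pbtOver (σ y) (σ x)
  | leaf, _ => rfl
  | node xl xr, y => by simp [under, σ, pbtOver, σ_under xr y]

lemma tle_σ {x y : PBT} (h : tle x y) : tle (σ y) (σ x) := by
  induction h with
  | refl x => exact tle.refl _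
  | trans h1 h2 ih1 ih2 => exact tle.trans ih2 ih1
  | rotate x y z => exact tle.rotate _ _ _
  | node_left z h ih => exact tle.node_right _ ih
  | node_right z h ih => exact tle.node_left _ ih

lemma mem_sum_σ {x y z : PBT} (h : z ∈ sum x y) : σ z ∈ sum (σ y) (σ x) := by
  obtain ⟨h1, h2⟩ := h
  exact ⟨by rw [← σ_under]; exact tle_σ h2, by rw [← σ_over]; exact tle_σ h1⟩

lemma σ_sum (x y : PBT) : σ '' sum x y = sum (σ y) (σ x) := by
  ext z
  constructor
  · rintro ⟨w, hw, rfl⟩; exact mem_sum_σ hw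
  · intro hz
    refine ⟨σ z, ?_, σσ z⟩
    have := mem_sum_σ hz
    rwa [σσ, σσ] at this

lemma σ_lsum : ∀ x y : PBT, σ '' lsum x y = rsum (σ y) (σ x)
  | x, leaf => by simp [lsum, rsum, σ]
  | leaf, node a b => by simp [lsum, rsum, σ]
  | node xl xr, node a b => by
      show σ '' ((fun z => node xl z) '' sum xr (node a b)) = _
      rw [Set.image_image]
      show _ = (fun z => node z (σ xl)) '' sum (σ (node a b)) (σ xr)
      rw [← σ_sum, Set.image_image]
      rfl

lemma σ_rsum : ∀ x y : PBT, σ '' rsum x y = lsum (σ y) (σ x)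
  | leaf, y => by simp [lsum, rsum, σ]
  | node a b, leaf => by simp [lsum, rsum, σ]
  | node a b, node yl yr => by
      show σ '' ((fun z => node z yr) '' sum (node a b) yl) = _
      rw [Set.image_image]
      show _ = (fun z => node (σ yr) z) '' sum (σ yl) (σ (node a b))
      rw [← σ_sum, Set.image_image]
      rfl

lemma σ_glsum (A B : Set PBT) : σ '' glsum A B = grsum (σ '' B) (σ '' A) := by
  ext t
  simp only [glsum, grsum, Set.mem_image, Set.mem_iUnion, exists_prop]
  constructor
  · rintro ⟨w, ⟨x, hx, y, hy, hw⟩, rfl⟩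
    refine ⟨σ y, ⟨y, hy, rfl⟩, σ x, ⟨x, hx, rfl⟩, ?_⟩
    rw [← σ_lsum]; exact ⟨w, hw, rfl⟩
  · rintro ⟨_, ⟨y, hy, rfl⟩, _, ⟨x, hx, rfl⟩, ht⟩
    rw [← σ_lsum] at ht
    obtain ⟨w, hw, rfl⟩ := ht
    exact ⟨w, ⟨x, hx, y, hy, hw⟩, rfl⟩

lemma σ_grsum (A B : Set PBT) : σ '' grsum A B = glsum (σ '' B) (σ '' A) := by
  ext t
  simp only [glsum, grsum, Set.mem_image, Set.mem_iUnion, exists_prop]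
  constructor
  · rintro ⟨w, ⟨x, hx, y, hy, hw⟩, rfl⟩
    refine ⟨σ y, ⟨y, hy, rfl⟩, σ x, ⟨x, hx, rfl⟩, ?_⟩
    rw [← σ_rsum]; exact ⟨w, hw, rfl⟩
  · rintro ⟨_, ⟨y, hy, rfl⟩, _, ⟨x, hx, rfl⟩, ht⟩
    rw [← σ_rsum] at ht
    obtain ⟨w, hw, rfl⟩ := ht
    exact ⟨w, ⟨x, hx, y, hy, hw⟩, rfl⟩

lemma assoc_mem (x z t : PBT) {y : PBT} (hy : y ≠ leaf) :
    (∃ w ∈ lsum y z, t ∈ rsum x w) ↔ ∃ v ∈ rsum x y, t ∈ lsum v z := by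
  cases y with
  | leaf => exact absurd rfl hy
  | node yl yr =>
    cases x with
    | leaf =>
      simp only [rsum]
      constructor
      · rintro ⟨w, hw, ht⟩; simp only [Set.mem_singleton_iff] at ht; subst ht
        exact ⟨node yl yr, rfl, hw⟩
      · rintro ⟨v, hv, ht⟩; simp only [Set.mem_singleton_iff] at hv; subst hv
        exact ⟨t, ht, rfl⟩
    | node xl xr =>
      cases z with
      | leaf =>
        simp only [lsum]
        constructor
        · rintro ⟨w, hw, ht⟩; simp only [Set.mem_singleton_iff] at hw; subst hw
          exact ⟨t, ht, rfl⟩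
        · rintro ⟨v, hv, ht⟩; simp only [Set.mem_singleton_iff] at ht; subst ht
          exact ⟨node yl yr, rfl, hv⟩
      | node zl zr =>
        simp only [lsum, rsum, Set.mem_image]
        constructor
        · rintro ⟨w, ⟨u, hu, rfl⟩, ht⟩
          simp only [rsum, Set.mem_image] at ht
          obtain ⟨s, hs, rfl⟩ := ht
          exact ⟨node s yr, ⟨s, hs, rfl⟩, by
            simp only [lsum, Set.mem_image]; exact ⟨u, hu, rfl⟩⟩
        · rintro ⟨v, ⟨s, hs, rfl⟩, ht⟩
          simp only [lsum, Set.mem_image] at ht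
          obtain ⟨u, hu, rfl⟩ := ht
          exact ⟨node yl u, ⟨u, hu, rfl⟩, by
            simp only [rsum, Set.mem_image]; exact ⟨s, hs, rfl⟩⟩

lemma grsum_glsum_assoc (X Y Z : Set PBT) (hY : ∀ y ∈ Y, y ≠ leaf) :
    grsum X (glsum Y Z) = glsum (grsum X Y) Z := by
  ext t
  simp only [glsum, grsum, Set.mem_iUnion, exists_prop]
  constructor
  · rintro ⟨x, hx, w, ⟨y, hy, z, hz, hw⟩, ht⟩
    obtain ⟨v, hv, ht'⟩ := (assoc_mem x z t (hY y hy)).mp ⟨w, hw, ht⟩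
    exact ⟨v, ⟨x, hx, y, hy, hv⟩, z, hz, ht'⟩
  · rintro ⟨v, ⟨x, hx, y, hy, hv⟩, z, hz, ht⟩
    obtain ⟨w, hw, ht'⟩ := (assoc_mem x z t (hY y hy)).mpr ⟨v, hv, ht⟩
    exact ⟨x, hx, w, ⟨y, hy, z, hz, hw⟩, ht'⟩

lemma σ_ne_leaf {y : PBT} (hy : y ≠ leaf) : σ y ≠ leaf := by
  cases y with
  | leaf => exact absurd rfl hy
  | node a b => simp [σ]

lemma σ_tmul (B : Set PBT) (hB : ∀ y ∈ B, y ≠ leaf) :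
    ∀ t : PBT, σ '' tmul t B = tmul (σ t) (σ '' B)
  | leaf => by simp [tmul, σ]
  | node l r => by
      have hσB : ∀ y ∈ σ '' B, y ≠ leaf := by
        rintro _ ⟨y, hy, rfl⟩; exact σ_ne_leaf (hB y hy)
      show σ '' glsum (grsum (tmul l B) B) (tmul r B) = _
      rw [σ_glsum, σ_grsum, σ_tmul B hB l, σ_tmul B hB r,
        grsum_glsum_assoc _ _ _ hσB]
      rfl

end PBT

open PBT in
/-- the reflection involution is multiplicative:
`σ(A × B) = σ(A) × σ(B)`. -/
theorem sigma_gmul (n m : ℕ) (hm : 0 < m) (A B : Set PBT)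
    (hA : Grove n A) (hB : Grove m B) :
    σ '' gmul A B = gmul (σ '' A) (σ '' B) := by
  have hB' : ∀ y ∈ B, y ≠ PBT.leaf := by
    intro y hy hyl
    have := hB.2 y hy
    rw [hyl] at this
    simp [PBT.deg] at this
    omega
  ext t
  simp only [gmul, Set.mem_image, Set.mem_iUnion, exists_prop]
  constructor
  · rintro ⟨w, ⟨x, hx, hw⟩, rfl⟩
    refine ⟨σ x, ⟨x, hx, rfl⟩, ?_⟩
    rw [← σ_tmul B hB' x]
    exact ⟨w, hw, rfl⟩
  · rintro ⟨_, ⟨x, hx, rfl⟩, ht⟩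
    rw [← σ_tmul B hB' x] at ht
    obtain ⟨w, hw, rfl⟩ := ht
    exact ⟨w, ⟨x, hx, hw⟩, rfl⟩
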